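/- arXiv:1709.05035 — 3 statements merged into one kernel-verified Lean document; each statement's English description precedes it below -/
import Mathlib

section
/- Let n ≥ 2 and let λ, ν ∈ ℂ with ν − λ a nonnegative integer. Then, as tempered distributions on ℝ^n, x_n²·𝒦_{λ−1,ν+1} = 4(λ − (n−1)/2 + ⌊(ν−λ+1)/2⌋)·𝒦_{λ+1,ν+1}, and moreover this distribution also equals 2(2ν − n + 1)·𝒦_{λ,ν} − 4 Δ' 𝒦_{λ+1,ν−1}. -/
/-- Partial derivative ∂_p of a complex-valued function on ℝ^n. -/
noncomputable def pd {n : ℕ} (p : Fin n) (f : (Fin n → ℝ) → ℂ) : (Fin n → ℝ) → ℂ :=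
  fun x => fderiv ℝ f x (Pi.single p 1)

/-- Δ' = ∂_1² + ⋯ + ∂_{n−1}², the Laplacian in the first n−1 variables on ℝ^n. -/
noncomputable def lapP {n : ℕ} (f : (Fin n → ℝ) → ℂ) : (Fin n → ℝ) → ℂ :=
  fun x => ∑ j ∈ Finset.univ.filter (fun j : Fin n => (j : ℕ) < n - 1), pd j (pd j f) x

/-- ∂_n, the partial derivative in the last variable on ℝ^n. -/
noncomputable def pdLast {n : ℕ} (f : (Fin n → ℝ) → ℂ) : (Fin n → ℝ) → ℂ :=
  if h : 0 < n then pd ⟨n - 1, by omega⟩ f else 0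

/-- The coefficient of z^{l−2k} in the renormalized Gegenbauer polynomial
C̃_l^α(z) = Σ_{k=0}^{⌊l/2⌋} (−1)^k (∏_{m=⌊(l+1)/2⌋}^{l−k−1}(α+m)) (2z)^{l−2k}/(k!(l−2k)!). -/
noncomputable def gegenCoeff (α : ℂ) (l k : ℕ) : ℂ :=
  (-1 : ℂ) ^ k * (∏ m ∈ Finset.Ico ((l + 1) / 2) (l - k), (α + (m : ℂ))) *
    2 ^ (l - 2 * k) / ((Nat.factorial k : ℂ) * (Nat.factorial (l - 2 * k) : ℂ))

/-- The action on a test function `φ` of the tempered distribution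
`𝒦_{λ,ν} = Σ_{k=0}^{⌊l/2⌋} a_k (−1)^k (Δ')^k ∂_n^{l−2k} δ` on ℝ^n, where `l = ν − λ`
and `a_k` are the coefficients of `C̃_l^{λ−(n−1)/2}`; each `∂` contributes a sign `−1`
and δ evaluates at 0.  By convention `𝒦_{λ,ν} = 0` when `l < 0`. -/
noncomputable def Kact (n : ℕ) (lam : ℂ) (l : ℤ) (φ : (Fin n → ℝ) → ℂ) : ℂ :=
  if 0 ≤ l then
    ∑ k ∈ Finset.range (l.toNat / 2 + 1),
      gegenCoeff (lam - ((n : ℂ) - 1) / 2) l.toNat k *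
        ((-1 : ℂ) ^ k * ((-1 : ℂ) ^ (l.toNat - 2 * k) *
          (pdLast (n := n))^[l.toNat - 2 * k] ((lapP (n := n))^[k] φ) 0))
  else 0

/-- γ(μ, a) := 1 if a is odd, μ + a/2 if a is even. -/
noncomputable def gam (mu : ℂ) (a : ℕ) : ℂ := if a % 2 = 1 then 1 else mu + ((a / 2 : ℕ) : ℂ)


namespace Stmt15Aux
set_option linter.unusedSectionVars false

open Finset

variable {n : ℕ}

/-- coordinate function -/
noncomputable def Cc (q : Fin n) : (Fin n → ℝ) → ℂ := fun x => ((x q : ℝ) : ℂ)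

lemma contDiff_Cc (q : Fin n) : ContDiff ℝ (⊤:ℕ∞) (Cc q) :=
  Complex.ofRealCLM.contDiff.comp (ContinuousLinearMap.proj q : (Fin n → ℝ) →L[ℝ] ℝ).contDiff

lemma pd_Cc (p q : Fin n) : pd p (Cc q) = fun _ => if q = p then 1 else 0 := by
  funext x
  have : (Cc q : (Fin n → ℝ) → ℂ)
      = ⇑(Complex.ofRealCLM.comp (ContinuousLinearMap.proj q : (Fin n → ℝ) →L[ℝ] ℝ)) := rfl
  rw [pd, this, ContinuousLinearMap.fderiv]
  simp [Pi.single_apply]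
  split_ifs <;> simp

lemma contDiff_pd (p : Fin n) {f : (Fin n → ℝ) → ℂ} (hf : ContDiff ℝ (⊤:ℕ∞) f) :
    ContDiff ℝ (⊤:ℕ∞) (pd p f) :=
  (hf.fderiv_right (m := (⊤:ℕ∞)) (by simp)).clm_apply contDiff_const

lemma contDiff_lapP {f : (Fin n → ℝ) → ℂ} (hf : ContDiff ℝ (⊤:ℕ∞) f) :
    ContDiff ℝ (⊤:ℕ∞) (lapP f) :=
  ContDiff.sum fun j _ => contDiff_pd j (contDiff_pd j hf)

lemma contDiff_iter_lapP (k : ℕ) {f : (Fin n → ℝ) → ℂ} (hf : ContDiff ℝ (⊤:ℕ∞) f) :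
    ContDiff ℝ (⊤:ℕ∞) (lapP^[k] f) := by
  induction k generalizing f with
  | zero => exact hf
  | succ k ih => rw [Function.iterate_succ_apply]; exact ih (contDiff_lapP hf)

lemma contDiff_pdLast {f : (Fin n → ℝ) → ℂ} (hf : ContDiff ℝ (⊤:ℕ∞) f) :
    ContDiff ℝ (⊤:ℕ∞) (pdLast f) := by
  unfold pdLast
  split
  · exact contDiff_pd _ hf
  · exact contDiff_const

lemma contDiff_iter_pdLast (m : ℕ) {f : (Fin n → ℝ) → ℂ} (hf : ContDiff ℝ (⊤:ℕ∞) f) :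
    ContDiff ℝ (⊤:ℕ∞) (pdLast^[m] f) := by
  induction m generalizing f with
  | zero => exact hf
  | succ m ih => rw [Function.iterate_succ_apply]; exact ih (contDiff_pdLast hf)

lemma pd_add (p : Fin n) {f g : (Fin n → ℝ) → ℂ}
    (hf : ContDiff ℝ (⊤:ℕ∞) f) (hg : ContDiff ℝ (⊤:ℕ∞) g) :
    pd p (fun x => f x + g x) = fun x => pd p f x + pd p g x := by
  funext x
  simp [pd, fderiv_fun_add ((hf.differentiable (by simp)) x) ((hg.differentiable (by simp)) x)]

lemma pd_mul (p : Fin n) {f g : (Fin n → ℝ) → ℂ}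
    (hf : ContDiff ℝ (⊤:ℕ∞) f) (hg : ContDiff ℝ (⊤:ℕ∞) g) :
    pd p (fun x => f x * g x) = fun x => pd p f x * g x + f x * pd p g x := by
  funext x
  simp only [pd, fderiv_fun_mul ((hf.differentiable (by simp)) x) ((hg.differentiable (by simp)) x)]
  simp [smul_eq_mul]
  ring

lemma pd_const_mul (p : Fin n) (a : ℂ) {f : (Fin n → ℝ) → ℂ}
    (hf : ContDiff ℝ (⊤:ℕ∞) f) :
    pd p (fun x => a * f x) = fun x => a * pd p f x := by
  funext x
  simp [pd, fderiv_const_mul ((hf.differentiable (by simp)) x) a]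



section WithE

variable (e : Fin n) (he : ((e : ℕ) + 1 = n))

noncomputable def Csq (e : Fin n) : (Fin n → ℝ) → ℂ := fun x => Cc e x * Cc e x

lemma contDiff_Csq : ContDiff ℝ (⊤:ℕ∞) (Csq e) := (contDiff_Cc e).mul (contDiff_Cc e)

include he in
lemma pd_Csq_mul_ne (j : Fin n) (hj : (j : ℕ) < n - 1) {f : (Fin n → ℝ) → ℂ}
    (hf : ContDiff ℝ (⊤:ℕ∞) f) :
    pd j (fun x => Csq e x * f x) = fun x => Csq e x * pd j f x := by
  have hje : e ≠ j := by
    intro h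
    have : (e : ℕ) = (j : ℕ) := by rw [h]
    omega
  rw [pd_mul j (contDiff_Csq e) hf]
  funext x
  have h1 : pd j (Csq e) = fun x => pd j (Cc e) x * Cc e x + Cc e x * pd j (Cc e) x :=
    pd_mul j (contDiff_Cc e) (contDiff_Cc e)
  rw [h1, pd_Cc]
  simp [if_neg hje]

include he in
lemma lapP_Csq_mul {f : (Fin n → ℝ) → ℂ} (hf : ContDiff ℝ (⊤:ℕ∞) f) :
    lapP (fun x => Csq e x * f x) = fun x => Csq e x * lapP f x := by
  funext x
  unfold lapP
  rw [Finset.mul_sum]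
  apply Finset.sum_congr rfl
  intro j hj
  have hjn : (j : ℕ) < n - 1 := by simpa using hj
  rw [pd_Csq_mul_ne e he j hjn hf, pd_Csq_mul_ne e he j hjn (contDiff_pd j hf)]

include he in
lemma iter_lapP_Csq_mul (k : ℕ) {f : (Fin n → ℝ) → ℂ} (hf : ContDiff ℝ (⊤:ℕ∞) f) :
    lapP^[k] (fun x => Csq e x * f x) = fun x => Csq e x * lapP^[k] f x := by
  induction k generalizing f with
  | zero => simp
  | succ k ih =>
    rw [Function.iterate_succ_apply, Function.iterate_succ_apply,
      lapP_Csq_mul e he hf, ih (contDiff_lapP hf)]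

include he in
lemma pdLast_eq {f : (Fin n → ℝ) → ℂ} : pdLast f = pd e f := by
  have hn1 : 0 < n := by omega
  have h : (⟨n - 1, by omega⟩ : Fin n) = e := Fin.ext (by simp; omega)
  unfold pdLast
  rw [dif_pos hn1, h]

include he in
lemma pd_Cc_mul {f : (Fin n → ℝ) → ℂ} (hf : ContDiff ℝ (⊤:ℕ∞) f) :
    pd e (fun x => Cc e x * f x) = fun x => Cc e x * pd e f x + f x := by
  rw [pd_mul e (contDiff_Cc e) hf, pd_Cc]
  funext x
  simp
  ring

include he in
lemma pd_Csq_mul {f : (Fin n → ℝ) → ℂ} (hf : ContDiff ℝ (⊤:ℕ∞) f) :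
    pd e (fun x => Csq e x * f x)
      = fun x => Csq e x * pd e f x + 2 * (Cc e x * f x) := by
  rw [pd_mul e (contDiff_Csq e) hf]
  funext x
  have h1 : pd e (Csq e) = fun x => pd e (Cc e) x * Cc e x + Cc e x * pd e (Cc e) x :=
    pd_mul e (contDiff_Cc e) (contDiff_Cc e)
  rw [h1, pd_Cc]
  simp [Csq]
  ring

include he in
lemma pd_iter (j : ℕ) {f : (Fin n → ℝ) → ℂ} :
    pd e (pdLast^[j] f) = pdLast^[j+1] f := by
  rw [← pdLast_eq e he]
  exact (Function.iterate_succ_apply' pdLast j f).symm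

include he in
lemma iter_pdLast_Cc_mul (m : ℕ) {f : (Fin n → ℝ) → ℂ} (hf : ContDiff ℝ (⊤:ℕ∞) f) :
    pdLast^[m+1] (fun x => Cc e x * f x)
      = fun x => Cc e x * pdLast^[m+1] f x + ((m:ℂ)+1) * pdLast^[m] f x := by
  induction m with
  | zero =>
    have h1 : pdLast^[0+1] (fun x => Cc e x * f x) = pdLast (fun x => Cc e x * f x) := rfl
    have h2 : pdLast^[0+1] f = pdLast f := rfl
    have h3 : pdLast^[0] f = f := rfl
    rw [h1, h2, h3, pdLast_eq e he, pd_Cc_mul e he hf, pdLast_eq e he]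
    funext x; push_cast; ring
  | succ m ih =>
    rw [Function.iterate_succ_apply' (f := pdLast), ih]
    have hA : ContDiff ℝ (⊤:ℕ∞) (fun x => Cc e x * pdLast^[m+1] f x) :=
      (contDiff_Cc e).mul (contDiff_iter_pdLast _ hf)
    have hB : ContDiff ℝ (⊤:ℕ∞) (fun x => ((m:ℂ)+1) * pdLast^[m] f x) :=
      contDiff_const.mul (contDiff_iter_pdLast _ hf)
    have k1 : pd e (fun x => Cc e x * pdLast^[m+1] f x)
        = fun x => Cc e x * pdLast^[m+1+1] f x + pdLast^[m+1] f x := by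
      rw [pd_Cc_mul e he (contDiff_iter_pdLast _ hf), pd_iter e he]
    have k2 : pd e (fun x => ((m:ℂ)+1) * pdLast^[m] f x)
        = fun x => ((m:ℂ)+1) * pdLast^[m+1] f x := by
      rw [pd_const_mul e _ (contDiff_iter_pdLast _ hf), pd_iter e he]
    rw [pdLast_eq e he, pd_add e hA hB, k1, k2]
    funext x
    push_cast
    ring

include he in
lemma iter_pdLast_Csq_mul (m : ℕ) {f : (Fin n → ℝ) → ℂ} (hf : ContDiff ℝ (⊤:ℕ∞) f) :
    pdLast^[m+2] (fun x => Csq e x * f x)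
      = fun x => Csq e x * pdLast^[m+2] f x
          + (2*((m:ℂ)+2)) * (Cc e x * pdLast^[m+1] f x)
          + ((m:ℂ)+2)*((m:ℂ)+1) * pdLast^[m] f x := by
  induction m with
  | zero =>
    have h1 : pdLast^[0+2] (fun x => Csq e x * f x)
        = pdLast (pdLast (fun x => Csq e x * f x)) := rfl
    have h2 : ∀ g : (Fin n → ℝ) → ℂ, pdLast^[0+2] g = pdLast (pdLast g) := fun _ => rfl
    have h3 : ∀ g : (Fin n → ℝ) → ℂ, pdLast^[0+1] g = pdLast g := fun _ => rfl
    have h4 : ∀ g : (Fin n → ℝ) → ℂ, pdLast^[0] g = g := fun _ => rfl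
    have k0 : pdLast (fun x => Csq e x * f x)
        = fun x => Csq e x * pd e f x + 2 * (Cc e x * f x) := by
      rw [pdLast_eq e he, pd_Csq_mul e he hf]
    have k1 : pd e (fun x => Csq e x * pd e f x)
        = fun x => Csq e x * pd e (pd e f) x + 2 * (Cc e x * pd e f x) :=
      pd_Csq_mul e he (contDiff_pd e hf)
    have k2 : pd e (fun x => 2 * (Cc e x * f x))
        = fun x => 2 * (Cc e x * pd e f x + f x) := by
      rw [pd_const_mul e _ ((contDiff_Cc e).mul hf), pd_Cc_mul e he hf]
    rw [h1, k0, pdLast_eq e he,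
      pd_add e ((contDiff_Csq e).mul (contDiff_pd e hf))
        (contDiff_const.mul ((contDiff_Cc e).mul hf)), k1, k2,
      h2 f, h3 f, h4 f]
    have h5 : pdLast (pdLast f) = pd e (pd e f) := by
      rw [pdLast_eq e he, pdLast_eq e he]
    rw [h5, pdLast_eq e he]
    funext x
    push_cast
    ring
  | succ m ih =>
    rw [Function.iterate_succ_apply' (f := pdLast), ih]
    have hC2 : ContDiff ℝ (⊤:ℕ∞) (fun x => Csq e x * pdLast^[m+2] f x) :=
      (contDiff_Csq e).mul (contDiff_iter_pdLast _ hf)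
    have hC3 : ContDiff ℝ (⊤:ℕ∞) (fun x => (2*((m:ℂ)+2)) * (Cc e x * pdLast^[m+1] f x)) :=
      contDiff_const.mul ((contDiff_Cc e).mul (contDiff_iter_pdLast _ hf))
    have hC4 : ContDiff ℝ (⊤:ℕ∞) (fun x => ((m:ℂ)+2)*((m:ℂ)+1) * pdLast^[m] f x) :=
      contDiff_const.mul (contDiff_iter_pdLast _ hf)
    have k1 : pd e (fun x => Csq e x * pdLast^[m+2] f x)
        = fun x => Csq e x * pdLast^[m+2+1] f x + 2 * (Cc e x * pdLast^[m+2] f x) := by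
      rw [pd_Csq_mul e he (contDiff_iter_pdLast _ hf), pd_iter e he]
    have k2 : pd e (fun x => (2*((m:ℂ)+2)) * (Cc e x * pdLast^[m+1] f x))
        = fun x => (2*((m:ℂ)+2)) * (Cc e x * pdLast^[m+1+1] f x + pdLast^[m+1] f x) := by
      rw [pd_const_mul e _ ((contDiff_Cc e).mul (contDiff_iter_pdLast _ hf)),
        pd_Cc_mul e he (contDiff_iter_pdLast _ hf), pd_iter e he]
    have k3 : pd e (fun x => ((m:ℂ)+2)*((m:ℂ)+1) * pdLast^[m] f x)
        = fun x => ((m:ℂ)+2)*((m:ℂ)+1) * pdLast^[m+1] f x := by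
      rw [pd_const_mul e _ (contDiff_iter_pdLast _ hf), pd_iter e he]
    rw [pdLast_eq e he, pd_add e (hC2.add hC3) hC4, pd_add e hC2 hC3, k1, k2, k3]
    funext x
    rw [show m + 2 + 1 = m + 1 + 2 from by omega, show m + 1 + 1 = m + 2 from by omega]
    push_cast
    ring

end WithE
section Eval

variable (e : Fin n) (he : ((e : ℕ) + 1 = n))

lemma Cc_zero : Cc (n := n) e 0 = 0 := by simp [Cc]

lemma Csq_zero : Csq (n := n) e 0 = 0 := by simp [Csq, Cc]

include he in
lemma eval_zero (k : ℕ) {f : (Fin n → ℝ) → ℂ} (hf : ContDiff ℝ (⊤:ℕ∞) f) :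
    pdLast^[0] (lapP^[k] (fun x => Csq e x * f x)) 0 = 0 := by
  rw [iter_lapP_Csq_mul e he k hf]
  simp [Csq_zero]

include he in
lemma eval_one (k : ℕ) {f : (Fin n → ℝ) → ℂ} (hf : ContDiff ℝ (⊤:ℕ∞) f) :
    pdLast^[1] (lapP^[k] (fun x => Csq e x * f x)) 0 = 0 := by
  rw [iter_lapP_Csq_mul e he k hf]
  have h1 : pdLast^[1] (fun x => Csq e x * lapP^[k] f x)
      = pd e (fun x => Csq e x * lapP^[k] f x) := by
    rw [Function.iterate_one, pdLast_eq e he]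
  rw [h1, pd_Csq_mul e he (contDiff_iter_lapP k hf)]
  simp [Csq_zero, Cc_zero]

include he in
lemma eval_main (k m : ℕ) {f : (Fin n → ℝ) → ℂ} (hf : ContDiff ℝ (⊤:ℕ∞) f) :
    pdLast^[m+2] (lapP^[k] (fun x => Csq e x * f x)) 0
      = ((m:ℂ)+2)*((m:ℂ)+1) * pdLast^[m] (lapP^[k] f) 0 := by
  rw [iter_lapP_Csq_mul e he k hf, iter_pdLast_Csq_mul e he m (contDiff_iter_lapP k hf)]
  simp [Csq_zero, Cc_zero]

end Eval

section Coeff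

lemma prod_shift (β : ℂ) (a b : ℕ) :
    ∏ m ∈ Finset.Ico (a+1) (b+1), (β + (m:ℂ)) = ∏ m ∈ Finset.Ico a b, ((β+1) + (m:ℂ)) := by
  rw [Finset.prod_Ico_eq_prod_range, Finset.prod_Ico_eq_prod_range,
    show b+1-(a+1) = b-a from by omega]
  apply Finset.prod_congr rfl
  intro i _
  push_cast
  ring

lemma fact_cast (t : ℕ) :
    ((Nat.factorial (t+2) : ℕ) : ℂ) = ((t:ℂ)+2) * ((t:ℂ)+1) * (Nat.factorial t : ℂ) := by
  rw [Nat.factorial_succ, Nat.factorial_succ]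
  push_cast
  ring

lemma cast_ne0 (t : ℕ) : ((t:ℂ)+2) ≠ 0 ∧ ((t:ℂ)+1) ≠ 0 := by
  constructor
  · have h : (((t+2:ℕ)):ℂ) ≠ 0 := Nat.cast_ne_zero.mpr (by omega)
    push_cast at h
    exact h
  · have h : (((t+1:ℕ)):ℂ) ≠ 0 := Nat.cast_ne_zero.mpr (by omega)
    push_cast at h
    exact h

lemma fact_ne0 (t : ℕ) : ((Nat.factorial t : ℕ) : ℂ) ≠ 0 :=
  Nat.cast_ne_zero.mpr (Nat.factorial_ne_zero t)

lemma gc_key1 (α : ℂ) (k t : ℕ) :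
    gegenCoeff (α-1) (2*k+t+2) k * (((t:ℂ)+2) * ((t:ℂ)+1))
      = 4*(α + (((2*k+t+1)/2 : ℕ):ℂ)) * gegenCoeff (α+1) (2*k+t) k := by
  have ha : (2*k+t+1)/2 ≤ k + t := by omega
  set a := (2*k+t+1)/2 with hadef
  have hP : ∏ m ∈ Finset.Ico ((2*k+t+2+1)/2) (2*k+t+2-k), ((α-1) + (m:ℂ))
      = (α + (a:ℂ)) * ∏ m ∈ Finset.Ico (a+1) (k+t+1), (α + (m:ℂ)) := by
    rw [show (2*k+t+2+1)/2 = a + 1 from by omega,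
      show 2*k+t+2-k = (k+t+1)+1 from by omega,
      prod_shift (α-1) a (k+t+1), show α - 1 + 1 = α from by ring]
    exact Finset.prod_eq_prod_Ico_succ_bot (show a < k+t+1 from by omega) _
  have hR : ∏ m ∈ Finset.Ico ((2*k+t+1)/2) (2*k+t-k), ((α+1) + (m:ℂ))
      = ∏ m ∈ Finset.Ico (a+1) (k+t+1), (α + (m:ℂ)) := by
    rw [show 2*k+t-k = k+t from by omega, ← hadef]
    exact (prod_shift α a (k+t)).symm
  unfold gegenCoeff
  rw [hP, hR, show 2*k+t+2-2*k = t+2 from by omega, show 2*k+t-2*k = t from by omega,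
    fact_cast t]
  obtain ⟨h2, h1⟩ := cast_ne0 t
  have hf1 := fact_ne0 k
  have hf2 := fact_ne0 t
  field_simp
  ring

lemma gc_key2_zero (α : ℂ) (l : ℕ) :
    gegenCoeff (α-1) (l+2) 0 * (((l:ℂ)+2)*((l:ℂ)+1)) = 4*(α+(l:ℂ)) * gegenCoeff α l 0 := by
  have hP : ∏ m ∈ Finset.Ico ((l+2+1)/2) (l+2-0), ((α-1) + (m:ℂ))
      = (∏ m ∈ Finset.Ico ((l+1)/2) (l-0), (α + (m:ℂ))) * (α + (l:ℂ)) := by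
    rw [show (l+2+1)/2 = (l+1)/2 + 1 from by omega,
      show l+2-0 = (l+1)+1 from by omega,
      prod_shift (α-1) ((l+1)/2) (l+1), show α - 1 + 1 = α from by ring,
      show l-0 = l from by omega,
      Finset.prod_Ico_succ_top (show (l+1)/2 ≤ l from by omega)]
  unfold gegenCoeff
  rw [hP, show l+2-2*0 = l+2 from by omega, show l-2*0 = l from by omega,
    show l+2 = l+2 from rfl]
  rw [show (Nat.factorial (l+2) : ℂ) = ((l:ℂ)+2) * ((l:ℂ)+1) * (Nat.factorial l : ℂ) from
    fact_cast l, show (2:ℂ) ^ (l+2) = 4 * 2^l from by rw [pow_add]; ring]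
  obtain ⟨h2, h1⟩ := cast_ne0 l
  have hf2 := fact_ne0 l
  field_simp

lemma gc_key2 (α : ℂ) (k t : ℕ) :
    gegenCoeff (α-1) (2*(k+1)+t+2) (k+1) * (((t:ℂ)+2) * ((t:ℂ)+1))
      = 4*(α + ((2*(k+1)+t : ℕ):ℂ)) * gegenCoeff α (2*(k+1)+t) (k+1)
        + 4 * gegenCoeff (α+1) (2*(k+1)+t-2) k := by
  have ha : (2*(k+1)+t+1)/2 ≤ (k+1) + t := by omega
  set K := k + 1 with hK
  set a := (2*K+t+1)/2 with hadef
  have ha1 : 1 ≤ a := by omega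
  have hP : ∏ m ∈ Finset.Ico ((2*K+t+2+1)/2) (2*K+t+2-K), ((α-1) + (m:ℂ))
      = (∏ m ∈ Finset.Ico a (K+t), (α + (m:ℂ))) * (α + ((K:ℕ):ℂ) + (t:ℂ)) := by
    rw [show (2*K+t+2+1)/2 = a + 1 from by omega,
      show 2*K+t+2-K = (K+t)+1+1 from by omega,
      prod_shift (α-1) a (K+t+1), show α - 1 + 1 = α from by ring,
      Finset.prod_Ico_succ_top (show a ≤ K+t from ha)]
    push_cast
    ring
  have hQ : ∏ m ∈ Finset.Ico ((2*K+t+1)/2) (2*K+t-K), (α + (m:ℂ))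
      = ∏ m ∈ Finset.Ico a (K+t), (α + (m:ℂ)) := by
    rw [show 2*K+t-K = K+t from by omega, ← hadef]
  have hS : ∏ m ∈ Finset.Ico ((2*K+t-2+1)/2) (2*K+t-2-k), ((α+1) + (m:ℂ))
      = ∏ m ∈ Finset.Ico a (K+t), (α + (m:ℂ)) := by
    rw [show (2*K+t-2+1)/2 = a-1 from by omega,
      show 2*K+t-2-k = (K+t)-1 from by omega]
    have := prod_shift α (a-1) ((K+t)-1)
    rw [show a-1+1 = a from by omega, show (K+t)-1+1 = K+t from by omega] at this
    exact this.symm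
  unfold gegenCoeff
  rw [hP, hQ, hS, show 2*K+t+2-2*K = t+2 from by omega,
    show 2*K+t-2*K = t from by omega, show 2*K+t-2-2*k = t from by omega,
    fact_cast t,
    show Nat.factorial K = K * Nat.factorial k from Nat.factorial_succ k,
    show ((-1:ℂ)) ^ K = (-1) * (-1)^k from by rw [hK, pow_succ]; ring]
  obtain ⟨h2, h1⟩ := cast_ne0 t
  have hf1 := fact_ne0 k
  have hf2 := fact_ne0 t
  have hKc : ((K * Nat.factorial k : ℕ) : ℂ) = ((K:ℕ):ℂ) * (Nat.factorial k : ℂ) := by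
    push_cast; ring
  have hKne : ((K:ℕ):ℂ) ≠ 0 := Nat.cast_ne_zero.mpr (by omega)
  have hcast1 : ((2*K+t : ℕ):ℂ) = 2*((K:ℕ):ℂ) + (t:ℂ) := by push_cast; ring
  rw [hKc, hcast1]
  field_simp
  ring

end Coeff

end Stmt15Aux

/-- `x_n²·𝒦_{λ−1,ν+1} = 4(λ − (n−1)/2 + ⌊(ν−λ+1)/2⌋)·𝒦_{λ+1,ν+1}`, and this also equals
`2(2ν − n + 1)·𝒦_{λ,ν} − 4 Δ' 𝒦_{λ+1,ν−1}`, as tempered distributions on ℝ^n, tested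
against an arbitrary Schwartz function `φ`; `(Δ' T)(φ) = T(Δ' φ)`. -/
theorem stmt15 (n : ℕ) (hn : 2 ≤ n) (lam nu : ℂ) (l : ℤ) (hl : 0 ≤ l)
    (hln : nu - lam = (l : ℂ)) (φ : SchwartzMap (Fin n → ℝ) ℂ) :
    (Kact n (lam - 1) (l + 2) (fun x => (((x ⟨n - 1, by omega⟩) ^ 2 : ℝ) : ℂ) * φ x)
        = 4 * (lam - ((n : ℂ) - 1) / 2 + (((l + 1) / 2 : ℤ) : ℂ)) *
            Kact n (lam + 1) l ⇑φ)
    ∧ (Kact n (lam - 1) (l + 2) (fun x => (((x ⟨n - 1, by omega⟩) ^ 2 : ℝ) : ℂ) * φ x)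
        = 2 * (2 * nu - (n : ℂ) + 1) * Kact n lam l ⇑φ
          - 4 * Kact n (lam + 1) (l - 2) (lapP ⇑φ)) := by
  classical
  have hn1 : 0 < n := by omega
  have hepos : n - 1 < n := by omega
  set e : Fin n := ⟨n - 1, hepos⟩ with hedef
  have he : (e : ℕ) + 1 = n := by rw [hedef]; simp only [Fin.val_mk]; omega
  have hφ : ContDiff ℝ (⊤:ℕ∞) ⇑φ := φ.smooth ⊤
  set α := lam - ((n : ℂ) - 1) / 2 with hα
  set ln := l.toNat with hlndef
  have hlln : l = (ln : ℤ) := by omega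
  have hfun : (fun x : Fin n → ℝ => (((x ⟨n - 1, by omega⟩) ^ 2 : ℝ) : ℂ) * φ x)
      = fun x => Stmt15Aux.Csq e x * φ x := by
    funext x
    simp only [Stmt15Aux.Csq, Stmt15Aux.Cc, hedef]
    push_cast
    ring
  have hLHS : Kact n (lam - 1) (l + 2) (fun x => (((x ⟨n - 1, by omega⟩) ^ 2 : ℝ) : ℂ) * φ x)
      = ∑ k ∈ Finset.range (ln / 2 + 1),
          gegenCoeff (α - 1) (ln + 2) k * ((-1:ℂ)^k * ((-1:ℂ)^(ln - 2*k) *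
            ((((ln - 2*k : ℕ):ℂ) + 2) * (((ln - 2*k : ℕ):ℂ) + 1)
              * pdLast^[ln - 2*k] (lapP^[k] ⇑φ) 0))) := by
    rw [hfun]
    unfold Kact
    rw [if_pos (show (0:ℤ) ≤ l + 2 by omega)]
    rw [show (l + 2).toNat = ln + 2 from by omega]
    rw [show lam - 1 - ((n:ℂ) - 1)/2 = α - 1 from by rw [hα]; ring]
    rw [show (ln + 2)/2 + 1 = (ln/2 + 1) + 1 from by omega]
    rw [Finset.sum_range_succ]
    have htop : gegenCoeff (α-1) (ln+2) (ln/2+1) * ((-1:ℂ)^(ln/2+1) *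
        ((-1:ℂ)^(ln + 2 - 2*(ln/2+1)) *
          pdLast^[ln + 2 - 2*(ln/2+1)] (lapP^[ln/2+1] (fun x => Stmt15Aux.Csq e x * ⇑φ x)) 0)) = 0 := by
      rcases (show ln + 2 - 2*(ln/2+1) = 0 ∨ ln + 2 - 2*(ln/2+1) = 1 from by omega) with h | h
      · rw [h, Stmt15Aux.eval_zero e he _ hφ]; ring
      · rw [h, Stmt15Aux.eval_one e he _ hφ]; ring
    rw [htop, add_zero]
    apply Finset.sum_congr rfl
    intro k hk
    have hk' : k ≤ ln / 2 := by
      have := Finset.mem_range.mp hk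
      omega
    rw [show ln + 2 - 2*k = (ln - 2*k) + 2 from by omega,
      Stmt15Aux.eval_main e he k (ln - 2*k) hφ]
    ring
  have hR1 : Kact n (lam + 1) l ⇑φ
      = ∑ k ∈ Finset.range (ln/2+1), gegenCoeff (α+1) ln k
          * ((-1:ℂ)^k * ((-1:ℂ)^(ln-2*k) * pdLast^[ln-2*k] (lapP^[k] ⇑φ) 0)) := by
    unfold Kact
    rw [if_pos hl, show lam + 1 - ((n:ℂ)-1)/2 = α + 1 from by rw [hα]; ring, ← hlndef]
  have hR0 : Kact n lam l ⇑φ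
      = ∑ k ∈ Finset.range (ln/2+1), gegenCoeff α ln k
          * ((-1:ℂ)^k * ((-1:ℂ)^(ln-2*k) * pdLast^[ln-2*k] (lapP^[k] ⇑φ) 0)) := by
    unfold Kact
    rw [if_pos hl, ← hα, ← hlndef]
  constructor
  · rw [hLHS, hR1, Finset.mul_sum]
    have hc : (((l + 1) / 2 : ℤ) : ℂ) = (((ln + 1)/2 : ℕ) : ℂ) := by
      have hceq : ((l+1)/2 : ℤ) = (((ln+1)/2 : ℕ) : ℤ) := by omega
      rw [hceq, Int.cast_natCast]
    rw [hc]
    apply Finset.sum_congr rfl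
    intro k hk
    have hk' : k ≤ ln / 2 := by
      have := Finset.mem_range.mp hk
      omega
    obtain ⟨t, ht⟩ : ∃ t, ln = 2*k + t := ⟨ln - 2*k, by omega⟩
    rw [ht, show 2*k+t-2*k = t from by omega]
    linear_combination ((-1:ℂ)^k * (-1:ℂ)^t * pdLast^[t] (lapP^[k] ⇑φ) 0)
      * Stmt15Aux.gc_key1 α k t
  · rw [hLHS, hR0]
    have hnu : 2 * (2 * nu - (n:ℂ) + 1) = 4 * (α + (ln:ℂ)) := by
      have hlc : (l:ℂ) = (ln:ℂ) := by rw [hlln]; push_cast; ring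
      rw [hα]
      linear_combination 4 * hln + 4 * hlc
    rw [hnu]
    by_cases hln2 : 2 ≤ ln
    · have hR2 : Kact n (lam + 1) (l - 2) (lapP ⇑φ)
          = ∑ k ∈ Finset.range (ln/2), gegenCoeff (α+1) (ln-2) k
              * ((-1:ℂ)^k * ((-1:ℂ)^(ln-2*(k+1)) * pdLast^[ln-2*(k+1)] (lapP^[k+1] ⇑φ) 0)) := by
        unfold Kact
        rw [if_pos (show (0:ℤ) ≤ l - 2 from by omega),
          show lam + 1 - ((n:ℂ)-1)/2 = α + 1 from by rw [hα]; ring,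
          show (l-2).toNat = ln - 2 from by omega,
          show (ln-2)/2 + 1 = ln/2 from by omega]
        apply Finset.sum_congr rfl
        intro k hk
        rw [show ln - 2 - 2*k = ln - 2*(k+1) from by omega,
          ← Function.iterate_succ_apply lapP k ⇑φ]
      rw [hR2, Finset.mul_sum,
        Finset.sum_range_succ' _ (ln/2), Finset.sum_range_succ' _ (ln/2)]
      have hmid : ∑ i ∈ Finset.range (ln/2),
            gegenCoeff (α - 1) (ln + 2) (i+1) * ((-1:ℂ)^(i+1) * ((-1:ℂ)^(ln - 2*(i+1)) *
              ((((ln - 2*(i+1) : ℕ):ℂ) + 2) * (((ln - 2*(i+1) : ℕ):ℂ) + 1)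
                * pdLast^[ln - 2*(i+1)] (lapP^[i+1] ⇑φ) 0)))
          = (∑ i ∈ Finset.range (ln/2),
              4 * (α + (ln:ℂ)) * (gegenCoeff α ln (i+1)
                * ((-1:ℂ)^(i+1) * ((-1:ℂ)^(ln-2*(i+1)) * pdLast^[ln-2*(i+1)] (lapP^[i+1] ⇑φ) 0))))
            - ∑ i ∈ Finset.range (ln/2),
              4 * (gegenCoeff (α+1) (ln-2) i
                * ((-1:ℂ)^i * ((-1:ℂ)^(ln-2*(i+1)) * pdLast^[ln-2*(i+1)] (lapP^[i+1] ⇑φ) 0))) := by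
        rw [← Finset.sum_sub_distrib]
        apply Finset.sum_congr rfl
        intro i hi
        have hi' : i < ln / 2 := Finset.mem_range.mp hi
        obtain ⟨t, ht⟩ : ∃ t, ln = 2*(i+1) + t := ⟨ln - 2*(i+1), by omega⟩
        rw [ht, show 2*(i+1)+t-2*(i+1) = t from by omega]
        linear_combination ((-1:ℂ)^(i+1) * (-1:ℂ)^t * pdLast^[t] (lapP^[i+1] ⇑φ) 0)
          * Stmt15Aux.gc_key2 α i t
      rw [hmid]
      have h00 : gegenCoeff (α - 1) (ln + 2) 0 * ((-1:ℂ)^0 * ((-1:ℂ)^(ln - 2*0) *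
            ((((ln - 2*0 : ℕ):ℂ) + 2) * (((ln - 2*0 : ℕ):ℂ) + 1)
              * pdLast^[ln - 2*0] (lapP^[0] ⇑φ) 0)))
          = 4 * (α + (ln:ℂ)) * (gegenCoeff α ln 0
              * ((-1:ℂ)^0 * ((-1:ℂ)^(ln-2*0) * pdLast^[ln-2*0] (lapP^[0] ⇑φ) 0))) := by
        rw [show ln - 2*0 = ln from by omega]
        linear_combination ((-1:ℂ)^ln * pdLast^[ln] (lapP^[0] ⇑φ) 0)
          * Stmt15Aux.gc_key2_zero α ln
      rw [h00, ← Finset.mul_sum, ← Finset.mul_sum]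
      ring
    · have h0 : Kact n (lam + 1) (l - 2) (lapP ⇑φ) = 0 := by
        unfold Kact
        rw [if_neg (show ¬ (0:ℤ) ≤ l - 2 from by omega)]
      rw [h0, mul_zero, sub_zero, show ln/2 = 0 from by omega,
        Finset.sum_range_one, Finset.sum_range_one]
      rw [show ln - 2*0 = ln from by omega]
      linear_combination ((-1:ℂ)^ln * pdLast^[ln] (lapP^[0] ⇑φ) 0)
        * Stmt15Aux.gc_key2_zero α ln
end

section
/- Let n ≥ 2 and let λ, ν ∈ ℂ with ν − λ a nonnegative integer. Then (x_1² + ⋯ + x_{n−1}²)·𝒦_{λ−1,ν+1} = 4ν·𝒦_{λ,ν} − 4(λ − (n−1)/2 + ⌊(ν−λ+1)/2⌋)·𝒦_{λ+1,ν+1} as tempered distributions on ℝ^n. -/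
open scoped ContDiff

section Aux
variable {n : ℕ}


theorem pd_smooth {f : (Fin n → ℝ) → ℂ} (hf : ContDiff ℝ ∞ f) (p : Fin n) :
    ContDiff ℝ ∞ (pd p f) := by
  have h1 : ContDiff ℝ ∞ (fderiv ℝ f) := hf.fderiv_right (by decide)
  exact (ContinuousLinearMap.apply ℝ ℂ ((Pi.single p 1 : Fin n → ℝ))).contDiff.comp h1

theorem pd_add {f g : (Fin n → ℝ) → ℂ} (hf : Differentiable ℝ f) (hg : Differentiable ℝ g)
    (p : Fin n) : pd p (fun x => f x + g x) = fun x => pd p f x + pd p g x := by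
  funext x
  simp only [pd, fderiv_fun_add (hf x) (hg x)]
  simp

theorem pd_const_mul {f : (Fin n → ℝ) → ℂ} (hf : Differentiable ℝ f) (c : ℂ)
    (p : Fin n) : pd p (fun x => c * f x) = fun x => c * pd p f x := by
  funext x
  simp only [pd]
  rw [fderiv_const_mul (hf x)]
  simp

theorem pd_mul {f g : (Fin n → ℝ) → ℂ} (hf : Differentiable ℝ f) (hg : Differentiable ℝ g)
    (p : Fin n) : pd p (fun x => f x * g x) = fun x => pd p f x * g x + f x * pd p g x := by
  funext x
  simp only [pd]
  rw [fderiv_fun_mul (hf x) (hg x)]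
  simp only [ContinuousLinearMap.add_apply, ContinuousLinearMap.smul_apply, smul_eq_mul]
  ring

theorem pd_sum {ι : Type*} (t : Finset ι) (F : ι → (Fin n → ℝ) → ℂ)
    (hF : ∀ i ∈ t, Differentiable ℝ (F i)) (p : Fin n) :
    pd p (fun x => ∑ i ∈ t, F i x) = fun x => ∑ i ∈ t, pd p (F i) x := by
  funext x
  simp only [pd]
  rw [fderiv_fun_sum (fun i hi => (hF i hi) x)]
  simp

theorem pd_comm {f : (Fin n → ℝ) → ℂ} (hf : ContDiff ℝ ∞ f) (i j : Fin n) :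
    pd i (pd j f) = pd j (pd i f) := by
  funext x
  have hsymm : IsSymmSndFDerivAt ℝ f x :=
    hf.contDiffAt.isSymmSndFDerivAt (by simp; decide)
  have hd : ContDiff ℝ ∞ (fderiv ℝ f) := hf.fderiv_right (by decide)
  have hd' : Differentiable ℝ (fderiv ℝ f) := hd.differentiable (by decide)
  have key : ∀ v w : Fin n → ℝ,
      fderiv ℝ (fun y => fderiv ℝ f y w) x v = fderiv ℝ (fderiv ℝ f) x v w := by
    intro v w
    rw [fderiv_clm_apply (hd' x) (differentiableAt_const w)]
    simp
  show fderiv ℝ (fun y => fderiv ℝ f y (Pi.single j 1)) x (Pi.single i 1)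
      = fderiv ℝ (fun y => fderiv ℝ f y (Pi.single i 1)) x (Pi.single j 1)
  rw [key, key, hsymm.eq]



theorem sm_diff {f : (Fin n → ℝ) → ℂ} (hf : ContDiff ℝ ∞ f) : Differentiable ℝ f :=
  hf.differentiable (by decide)

def coordC {n : ℕ} (j : Fin n) : (Fin n → ℝ) → ℂ := fun x => (x j : ℂ)

theorem coordC_eq (j : Fin n) :
    coordC j = ⇑(Complex.ofRealCLM.comp (ContinuousLinearMap.proj (R := ℝ) (φ := fun _ : Fin n => ℝ) j)) := rfl

theorem coordC_smooth (j : Fin n) : ContDiff ℝ ∞ (coordC j) := by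
  rw [coordC_eq]; exact ContinuousLinearMap.contDiff _

theorem pd_coordC (p j : Fin n) : pd p (coordC j) = fun _ => if j = p then (1:ℂ) else 0 := by
  funext x
  rw [pd, coordC_eq, ContinuousLinearMap.fderiv]
  simp [Pi.single_apply, apply_ite]

def Sn (n : ℕ) : Finset (Fin n) := Finset.univ.filter (fun j : Fin n => (j : ℕ) < n - 1)

theorem card_Sn (hn : 1 ≤ n) : (Sn n).card = n - 1 := by
  have : Sn n = Finset.Iio (⟨n-1, by omega⟩ : Fin n) := by
    ext j; simp [Sn, Fin.lt_def]
  rw [this, Fin.card_Iio]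

noncomputable def r2C (n : ℕ) : (Fin n → ℝ) → ℂ := fun x => ∑ j ∈ Sn n, (coordC j x)^2

theorem r2C_smooth : ContDiff ℝ ∞ (r2C n) :=
  ContDiff.sum fun j _ => (coordC_smooth j).pow 2

theorem pd_r2C (p : Fin n) :
    pd p (r2C n) = fun x => if p ∈ Sn n then 2 * coordC p x else 0 := by
  have h1 : pd p (r2C n) = fun x => ∑ j ∈ Sn n, pd p (fun y => coordC j y * coordC j y) x := by
    have : r2C n = fun x => ∑ j ∈ Sn n, coordC j x * coordC j x := by
      funext x; simp [r2C, sq]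
    rw [this, pd_sum _ _ (fun j _ => (sm_diff ((coordC_smooth j).mul (coordC_smooth j))))]
  rw [h1]
  funext x
  have h2 : ∀ j ∈ Sn n, pd p (fun y => coordC j y * coordC j y) x
      = if j = p then 2 * coordC j x else 0 := by
    intro j _
    rw [pd_mul (sm_diff (coordC_smooth j)) (sm_diff (coordC_smooth j)), pd_coordC]
    by_cases h : j = p <;> simp [h] <;> ring
  rw [Finset.sum_congr rfl h2, Finset.sum_ite_eq' (Sn n) p (fun j => 2 * coordC j x)]

theorem lapP_eq (f : (Fin n → ℝ) → ℂ) : lapP f = fun x => ∑ j ∈ Sn n, pd j (pd j f) x := rfl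

theorem lapP_smooth {f : (Fin n → ℝ) → ℂ} (hf : ContDiff ℝ ∞ f) : ContDiff ℝ ∞ (lapP f) := by
  rw [lapP_eq]
  exact ContDiff.sum fun j _ => pd_smooth (pd_smooth hf j) j

section Aux2
variable {n : ℕ}

theorem lapP_add {f g : (Fin n → ℝ) → ℂ} (hf : ContDiff ℝ ∞ f) (hg : ContDiff ℝ ∞ g) :
    lapP (fun x => f x + g x) = fun x => lapP f x + lapP g x := by
  have h1 : ∀ i : Fin n, pd i (pd i (fun x => f x + g x)) =
      fun x => pd i (pd i f) x + pd i (pd i g) x := by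
    intro i
    rw [pd_add (sm_diff hf) (sm_diff hg), pd_add (sm_diff (pd_smooth hf i)) (sm_diff (pd_smooth hg i))]
  funext x
  simp only [lapP_eq]
  rw [← Finset.sum_add_distrib]
  exact Finset.sum_congr rfl fun i _ => by rw [h1 i]

theorem lapP_const_mul {f : (Fin n → ℝ) → ℂ} (hf : ContDiff ℝ ∞ f) (c : ℂ) :
    lapP (fun x => c * f x) = fun x => c * lapP f x := by
  have h1 : ∀ i : Fin n, pd i (pd i (fun x => c * f x)) =
      fun x => c * pd i (pd i f) x := by
    intro i
    rw [pd_const_mul (sm_diff hf), pd_const_mul (sm_diff (pd_smooth hf i))]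
  funext x
  simp only [lapP_eq]
  rw [Finset.mul_sum]
  exact Finset.sum_congr rfl fun i _ => by rw [h1 i]

theorem lapP_r2_mul (hn : 1 ≤ n) {g : (Fin n → ℝ) → ℂ} (hg : ContDiff ℝ ∞ g) :
    lapP (fun x => r2C n x * g x) = fun x =>
      r2C n x * lapP g x + 4 * (∑ j ∈ Sn n, coordC j x * pd j g x)
        + 2 * ((n:ℂ) - 1) * g x := by
  have dg := sm_diff hg
  have dr2 := sm_diff (r2C_smooth (n := n))
  have key : ∀ i ∈ Sn n, pd i (pd i (fun x => r2C n x * g x)) =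
      fun x => 2 * g x + 4 * (coordC i x * pd i g x) + r2C n x * pd i (pd i g) x := by
    intro i hi
    have h1 : pd i (fun x => r2C n x * g x) =
        fun x => 2 * (coordC i x * g x) + r2C n x * pd i g x := by
      rw [pd_mul dr2 dg, pd_r2C]
      funext x
      simp only [hi, if_pos]
      ring
    rw [h1, pd_add (by
        exact (sm_diff (contDiff_const.mul ((coordC_smooth i).mul hg))))
      (sm_diff (r2C_smooth.mul (pd_smooth hg i)))]
    rw [pd_const_mul (sm_diff ((coordC_smooth i).mul hg)),
      pd_mul (sm_diff (coordC_smooth i)) dg,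
      pd_mul dr2 (sm_diff (pd_smooth hg i)), pd_coordC, pd_r2C]
    funext x
    simp only [hi, if_pos]
    ring
  funext x
  simp only [lapP_eq]
  rw [Finset.sum_congr rfl (fun i hi => by rw [key i hi])]
  rw [Finset.sum_add_distrib, Finset.sum_add_distrib, Finset.sum_const, card_Sn hn,
    ← Finset.mul_sum, ← Finset.mul_sum]
  rw [nsmul_eq_mul, Nat.cast_sub hn]
  push_cast
  ring

theorem lapP_apply (f : (Fin n → ℝ) → ℂ) (x : Fin n → ℝ) :
    lapP f x = ∑ j ∈ Sn n, pd j (pd j f) x := rfl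

theorem lapP_euler {g : (Fin n → ℝ) → ℂ} (hg : ContDiff ℝ ∞ g) :
    lapP (fun x => ∑ j ∈ Sn n, coordC j x * pd j g x) =
      fun x => (∑ j ∈ Sn n, coordC j x * pd j (lapP g) x) + 2 * lapP g x := by
  have sm1 : ∀ j : Fin n, ContDiff ℝ ∞ (pd j g) := fun j => pd_smooth hg j
  have sm2 : ∀ i j : Fin n, ContDiff ℝ ∞ (pd i (pd j g)) := fun i j => pd_smooth (sm1 j) i
  have h1 : ∀ i ∈ Sn n, pd i (fun x => ∑ j ∈ Sn n, coordC j x * pd j g x) =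
      fun x => pd i g x + ∑ j ∈ Sn n, coordC j x * pd i (pd j g) x := by
    intro i hi
    rw [pd_sum _ _ (fun j _ => sm_diff ((coordC_smooth j).mul (sm1 j)))]
    funext x
    calc ∑ j ∈ Sn n, pd i (fun y => coordC j y * pd j g y) x
        = ∑ j ∈ Sn n, ((if j = i then (1:ℂ) else 0) * pd j g x
            + coordC j x * pd i (pd j g) x) := by
          refine Finset.sum_congr rfl fun j _ => ?_
          rw [pd_mul (sm_diff (coordC_smooth j)) (sm_diff (sm1 j)), pd_coordC]
      _ = pd i g x + ∑ j ∈ Sn n, coordC j x * pd i (pd j g) x := by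
          simp only [ite_mul, one_mul, zero_mul]
          rw [Finset.sum_add_distrib,
            Finset.sum_ite_eq' (Sn n) i (fun j => pd j g x), if_pos hi]
  have h2 : ∀ i ∈ Sn n, pd i (pd i (fun x => ∑ j ∈ Sn n, coordC j x * pd j g x)) =
      fun x => 2 * pd i (pd i g) x + ∑ j ∈ Sn n, coordC j x * pd i (pd i (pd j g)) x := by
    intro i hi
    rw [h1 i hi, pd_add (sm_diff (sm1 i)) (sm_diff (ContDiff.sum
      (fun j _ => (coordC_smooth j).mul (sm2 i j)))),
      pd_sum _ _ (fun j _ => sm_diff ((coordC_smooth j).mul (sm2 i j)))]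
    funext x
    calc pd i (pd i g) x + ∑ j ∈ Sn n, pd i (fun y => coordC j y * pd i (pd j g) y) x
        = pd i (pd i g) x + ∑ j ∈ Sn n, ((if j = i then (1:ℂ) else 0) * pd i (pd j g) x
            + coordC j x * pd i (pd i (pd j g)) x) := by
          congr 1
          refine Finset.sum_congr rfl fun j _ => ?_
          rw [pd_mul (sm_diff (coordC_smooth j)) (sm_diff (sm2 i j)), pd_coordC]
      _ = 2 * pd i (pd i g) x + ∑ j ∈ Sn n, coordC j x * pd i (pd i (pd j g)) x := by
          simp only [ite_mul, one_mul, zero_mul]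
          rw [Finset.sum_add_distrib,
            Finset.sum_ite_eq' (Sn n) i (fun j => pd i (pd j g) x), if_pos hi]
          ring
  have h3 : ∀ j : Fin n, ∀ x, ∑ i ∈ Sn n, pd i (pd i (pd j g)) x = pd j (lapP g) x := by
    intro j x
    rw [lapP_eq, pd_sum _ _ (fun i _ => sm_diff (sm2 i i))]
    exact Finset.sum_congr rfl fun i _ => by
      rw [pd_comm hg i j, pd_comm (sm1 i) i j]
  funext x
  calc lapP (fun x => ∑ j ∈ Sn n, coordC j x * pd j g x) x
      = ∑ i ∈ Sn n, (2 * pd i (pd i g) x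
          + ∑ j ∈ Sn n, coordC j x * pd i (pd i (pd j g)) x) := by
        rw [lapP_apply]
        exact Finset.sum_congr rfl fun i hi => by rw [h2 i hi]
    _ = (∑ j ∈ Sn n, coordC j x * pd j (lapP g) x) + 2 * lapP g x := by
        rw [Finset.sum_add_distrib, Finset.sum_comm, ← Finset.mul_sum, ← lapP_apply,
          add_comm]
        congr 1
        exact Finset.sum_congr rfl fun j _ => by rw [← Finset.mul_sum, h3 j x]

theorem lapP_iter_smooth {f : (Fin n → ℝ) → ℂ} (hf : ContDiff ℝ ∞ f) (k : ℕ) :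
    ContDiff ℝ ∞ (lapP^[k] f) := by
  induction k with
  | zero => exact hf
  | succ k ih => rw [Function.iterate_succ_apply']; exact lapP_smooth ih

theorem expand (hn : 1 ≤ n) {φ : (Fin n → ℝ) → ℂ} (hφ : ContDiff ℝ ∞ φ) (k : ℕ) :
    lapP^[k+1] (fun x => r2C n x * φ x) = fun x =>
      r2C n x * lapP^[k+1] φ x
      + (4*((k:ℂ)+1)) * (∑ j ∈ Sn n, coordC j x * pd j (lapP^[k] φ) x)
      + (2*((k:ℂ)+1)*((n:ℂ)-1) + 4*((k:ℂ)+1)*(k:ℂ)) * lapP^[k] φ x := by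
  induction k with
  | zero =>
    rw [Function.iterate_one, lapP_r2_mul hn hφ]
    funext x
    simp only [Function.iterate_one, Function.iterate_zero, id_eq]
    push_cast
    ring
  | succ k ih =>
    have g1 : ContDiff ℝ ∞ (lapP^[k+1] φ) := lapP_iter_smooth hφ (k+1)
    have g2 : ContDiff ℝ ∞ (lapP^[k] φ) := lapP_iter_smooth hφ k
    have smE : ContDiff ℝ ∞ (fun x => ∑ j ∈ Sn n, coordC j x * pd j (lapP^[k] φ) x) :=
      ContDiff.sum fun j _ => (coordC_smooth j).mul (pd_smooth g2 j)
    have smA : ContDiff ℝ ∞ (fun x => r2C n x * lapP^[k+1] φ x) := r2C_smooth.mul g1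
    have smB : ContDiff ℝ ∞ (fun x => (4*((k:ℂ)+1)) *
        (∑ j ∈ Sn n, coordC j x * pd j (lapP^[k] φ) x)) := contDiff_const.mul smE
    have smC : ContDiff ℝ ∞ (fun x =>
        (2*((k:ℂ)+1)*((n:ℂ)-1) + 4*((k:ℂ)+1)*(k:ℂ)) * lapP^[k] φ x) :=
      contDiff_const.mul g2
    have hstep : lapP^[k+1+1] (fun x => r2C n x * φ x)
        = lapP (lapP^[k+1] (fun x => r2C n x * φ x)) := by
      rw [Function.iterate_succ_apply']
    rw [hstep, ih]
    have hsplit : (fun x =>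
        r2C n x * lapP^[k+1] φ x
        + (4*((k:ℂ)+1)) * (∑ j ∈ Sn n, coordC j x * pd j (lapP^[k] φ) x)
        + (2*((k:ℂ)+1)*((n:ℂ)-1) + 4*((k:ℂ)+1)*(k:ℂ)) * lapP^[k] φ x)
        = (fun x =>
          (fun y => r2C n y * lapP^[k+1] φ y
            + (4*((k:ℂ)+1)) * (∑ j ∈ Sn n, coordC j y * pd j (lapP^[k] φ) y)) x
          + (fun y => (2*((k:ℂ)+1)*((n:ℂ)-1) + 4*((k:ℂ)+1)*(k:ℂ)) * lapP^[k] φ y) x) :=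
      rfl
    rw [hsplit, lapP_add (smA.add smB) smC, lapP_add smA smB,
      lapP_r2_mul hn g1, lapP_const_mul smE (4*((k:ℂ)+1)), lapP_euler g2,
      lapP_const_mul g2 _]
    funext x
    simp only [← Function.iterate_succ_apply' lapP]
    push_cast
    ring

theorem pdLast_eq (hn : 0 < n) (f : (Fin n → ℝ) → ℂ) :
    pdLast f = pd (⟨n-1, by omega⟩ : Fin n) f := dif_pos hn

theorem pdLast_smooth (hn : 0 < n) {f : (Fin n → ℝ) → ℂ} (hf : ContDiff ℝ ∞ f) :
    ContDiff ℝ ∞ (pdLast f) := by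
  rw [pdLast_eq hn]; exact pd_smooth hf _

theorem pdLast_iter_smooth (hn : 0 < n) {f : (Fin n → ℝ) → ℂ} (hf : ContDiff ℝ ∞ f) (m : ℕ) :
    ContDiff ℝ ∞ (pdLast^[m] f) := by
  induction m with
  | zero => exact hf
  | succ m ih => rw [Function.iterate_succ_apply']; exact pdLast_smooth hn ih

theorem pdLast_iter_add (hn : 0 < n) {f g : (Fin n → ℝ) → ℂ}
    (hf : ContDiff ℝ ∞ f) (hg : ContDiff ℝ ∞ g) (m : ℕ) :
    pdLast^[m] (fun x => f x + g x) = fun x => pdLast^[m] f x + pdLast^[m] g x := by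
  induction m generalizing f g with
  | zero => rfl
  | succ m ih =>
    rw [Function.iterate_succ_apply, Function.iterate_succ_apply,
      Function.iterate_succ_apply, pdLast_eq hn,
      pd_add (sm_diff hf) (sm_diff hg), ← pdLast_eq hn, ← pdLast_eq hn]
    exact ih (pdLast_smooth hn hf) (pdLast_smooth hn hg)

theorem pdLast_iter_const_mul (hn : 0 < n) {f : (Fin n → ℝ) → ℂ}
    (hf : ContDiff ℝ ∞ f) (c : ℂ) (m : ℕ) :
    pdLast^[m] (fun x => c * f x) = fun x => c * pdLast^[m] f x := by
  induction m generalizing f with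
  | zero => rfl
  | succ m ih =>
    rw [Function.iterate_succ_apply, Function.iterate_succ_apply, pdLast_eq hn,
      pd_const_mul (sm_diff hf), ← pdLast_eq hn]
    exact ih (pdLast_smooth hn hf)

theorem pdLast_sum (hn : 0 < n) {ι : Type*} (t : Finset ι)
    (F : ι → (Fin n → ℝ) → ℂ) (hF : ∀ i ∈ t, ContDiff ℝ ∞ (F i)) :
    pdLast (fun x => ∑ i ∈ t, F i x) = fun x => ∑ i ∈ t, pdLast (F i) x := by
  rw [pdLast_eq hn, pd_sum t F (fun i hi => sm_diff (hF i hi))]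
  funext x
  exact Finset.sum_congr rfl fun i _ => by rw [pdLast_eq hn]

theorem pdLast_iter_sum (hn : 0 < n) {ι : Type*} (t : Finset ι)
    (F : ι → (Fin n → ℝ) → ℂ) (hF : ∀ i ∈ t, ContDiff ℝ ∞ (F i)) (m : ℕ) :
    pdLast^[m] (fun x => ∑ i ∈ t, F i x) = fun x => ∑ i ∈ t, pdLast^[m] (F i) x := by
  induction m generalizing F with
  | zero => rfl
  | succ m ih =>
    rw [Function.iterate_succ_apply, pdLast_sum hn t F hF,
      ih _ (fun i hi => pdLast_smooth hn (hF i hi))]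
    funext x
    exact Finset.sum_congr rfl fun i _ => by rw [← Function.iterate_succ_apply]

theorem pdLast_iter_mul_left (hn : 0 < n) {c u : (Fin n → ℝ) → ℂ}
    (hc : ContDiff ℝ ∞ c) (hpc : pd (⟨n-1, by omega⟩ : Fin n) c = fun _ => 0)
    (hu : ContDiff ℝ ∞ u) (m : ℕ) :
    pdLast^[m] (fun x => c x * u x) = fun x => c x * pdLast^[m] u x := by
  induction m generalizing u with
  | zero => rfl
  | succ m ih =>
    rw [Function.iterate_succ_apply, Function.iterate_succ_apply, pdLast_eq hn,
      pd_mul (sm_diff hc) (sm_diff hu), hpc]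
    have : (fun x => (fun _ => (0:ℂ)) x * u x + c x * pd (⟨n-1, by omega⟩ : Fin n) u x)
        = fun x => c x * pd (⟨n-1, by omega⟩ : Fin n) u x := by
      funext x; simp
    rw [this, ← pdLast_eq hn]
    exact ih (pdLast_smooth hn hu)

theorem coordC_zero (j : Fin n) : coordC j (0 : Fin n → ℝ) = 0 := by
  simp [coordC]

theorem r2C_zero : r2C n (0 : Fin n → ℝ) = 0 := by
  simp [r2C, coordC]

theorem pd_last_r2C (hn : 0 < n) :
    pd (⟨n-1, by omega⟩ : Fin n) (r2C n) = fun _ => 0 := by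
  rw [pd_r2C]
  funext x
  rw [if_neg]
  intro h
  have := (Finset.mem_filter.1 h).2
  simp at this

theorem pd_last_coordC (hn : 0 < n) (j : Fin n) (hj : (j : ℕ) < n - 1) :
    pd (⟨n-1, by omega⟩ : Fin n) (coordC j) = fun _ => 0 := by
  rw [pd_coordC]
  funext x
  rw [if_neg]
  intro h
  rw [h] at hj
  simp at hj

theorem eval0_r2 (hn : 0 < n) {u : (Fin n → ℝ) → ℂ} (hu : ContDiff ℝ ∞ u) (m : ℕ) :
    pdLast^[m] (fun x => r2C n x * u x) (0 : Fin n → ℝ) = 0 := by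
  rw [pdLast_iter_mul_left hn r2C_smooth (pd_last_r2C hn) hu m]
  simp [r2C_zero]

theorem eval0_coord (hn : 0 < n) (j : Fin n) (hj : (j : ℕ) < n - 1)
    {u : (Fin n → ℝ) → ℂ} (hu : ContDiff ℝ ∞ u) (m : ℕ) :
    pdLast^[m] (fun x => coordC j x * u x) (0 : Fin n → ℝ) = 0 := by
  rw [pdLast_iter_mul_left hn (coordC_smooth j) (pd_last_coordC hn j hj) hu m]
  simp [coordC_zero]

theorem keyEval (hn : 0 < n) {φ : (Fin n → ℝ) → ℂ} (hφ : ContDiff ℝ ∞ φ) (k m : ℕ) :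
    pdLast^[m] (lapP^[k+1] (fun x => r2C n x * φ x)) (0 : Fin n → ℝ)
      = (2*((k:ℂ)+1)*((n:ℂ)-1) + 4*((k:ℂ)+1)*(k:ℂ))
          * pdLast^[m] (lapP^[k] φ) (0 : Fin n → ℝ) := by
  have g1 : ContDiff ℝ ∞ (lapP^[k+1] φ) := lapP_iter_smooth hφ (k+1)
  have g2 : ContDiff ℝ ∞ (lapP^[k] φ) := lapP_iter_smooth hφ k
  have smE : ContDiff ℝ ∞ (fun x => ∑ j ∈ Sn n, coordC j x * pd j (lapP^[k] φ) x) :=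
    ContDiff.sum fun j _ => (coordC_smooth j).mul (pd_smooth g2 j)
  have smA : ContDiff ℝ ∞ (fun x => r2C n x * lapP^[k+1] φ x) := r2C_smooth.mul g1
  have smB : ContDiff ℝ ∞ (fun x => (4*((k:ℂ)+1)) *
      (∑ j ∈ Sn n, coordC j x * pd j (lapP^[k] φ) x)) := contDiff_const.mul smE
  have smC : ContDiff ℝ ∞ (fun x =>
      (2*((k:ℂ)+1)*((n:ℂ)-1) + 4*((k:ℂ)+1)*(k:ℂ)) * lapP^[k] φ x) :=
    contDiff_const.mul g2
  rw [expand hn hφ k]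
  have hsplit : (fun x =>
      r2C n x * lapP^[k+1] φ x
      + (4*((k:ℂ)+1)) * (∑ j ∈ Sn n, coordC j x * pd j (lapP^[k] φ) x)
      + (2*((k:ℂ)+1)*((n:ℂ)-1) + 4*((k:ℂ)+1)*(k:ℂ)) * lapP^[k] φ x)
      = (fun x =>
        (fun y => r2C n y * lapP^[k+1] φ y
          + (4*((k:ℂ)+1)) * (∑ j ∈ Sn n, coordC j y * pd j (lapP^[k] φ) y)) x
        + (fun y => (2*((k:ℂ)+1)*((n:ℂ)-1) + 4*((k:ℂ)+1)*(k:ℂ)) * lapP^[k] φ y) x) :=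
    rfl
  rw [hsplit, pdLast_iter_add hn (smA.add smB) smC m]
  beta_reduce
  rw [pdLast_iter_add hn smA smB m, pdLast_iter_const_mul hn g2 _ m,
    pdLast_iter_const_mul hn smE _ m,
    pdLast_iter_sum hn (Sn n) _ (fun j _ => (coordC_smooth j).mul (pd_smooth g2 j)) m]
  beta_reduce
  rw [eval0_r2 hn g1 m]
  have hz : ∑ j ∈ Sn n, pdLast^[m] (fun x => coordC j x * pd j (lapP^[k] φ) x)
      (0 : Fin n → ℝ) = 0 := by
    refine Finset.sum_eq_zero fun j hj => ?_
    have : (j : ℕ) < n - 1 := (Finset.mem_filter.1 hj).2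
    exact eval0_coord hn j this (pd_smooth g2 j) m
  rw [hz]
  ring

theorem coeffId (α c D : ℂ) (L k : ℕ) (hk : k ≤ L / 2) :
    gegenCoeff (α - 1) (L + 2) (k + 1) * ((-1:ℂ)^(k+1) *
      ((-1:ℂ)^(L - 2*k) * ((2*((k:ℂ)+1)*(c-1) + 4*((k:ℂ)+1)*(k:ℂ)) * D)))
   = 4 * (α + (c-1)/2 + (L:ℂ)) * (gegenCoeff α L k * ((-1:ℂ)^k * ((-1:ℂ)^(L-2*k) * D)))
     - 4 * (α + (((L+1)/2 : ℕ) : ℂ)) *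
        (gegenCoeff (α+1) L k * ((-1:ℂ)^k * ((-1:ℂ)^(L-2*k) * D))) := by
  have hk2 : 2*k ≤ L := by omega
  have h1 : (L + 2 + 1) / 2 = (L+1)/2 + 1 := by omega
  have h2 : L + 2 - (k + 1) = (L - k) + 1 := by omega
  have h3 : L + 2 - 2*(k+1) = L - 2*k := by omega
  have hs : (L+1)/2 ≤ L - k := by omega
  set s := (L+1)/2 with hsdef
  unfold gegenCoeff
  rw [h1, h2, h3]
  have hprod1 : (∏ m ∈ Finset.Ico (s+1) ((L-k)+1), ((α-1) + (m:ℂ)))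
      = ∏ m ∈ Finset.Ico s (L-k), (α + (m:ℂ)) := by
    rw [← Finset.prod_Ico_add' (fun m : ℕ => (α-1) + (m:ℂ)) s (L-k) 1]
    refine Finset.prod_congr rfl fun m _ => ?_
    push_cast; ring
  rw [hprod1]
  have hprod2 : (α + (s:ℂ)) * (∏ m ∈ Finset.Ico s (L-k), ((α+1) + (m:ℂ)))
      = (∏ m ∈ Finset.Ico s (L-k), (α + (m:ℂ))) * (α + ((L:ℂ) - (k:ℂ))) := by
    have e1 : (∏ m ∈ Finset.Ico s (L-k), ((α+1) + (m:ℂ)))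
        = ∏ m ∈ Finset.Ico (s+1) ((L-k)+1), (α + (m:ℂ)) := by
      rw [← Finset.prod_Ico_add' (fun m : ℕ => α + (m:ℂ)) s (L-k) 1]
      refine Finset.prod_congr rfl fun m _ => ?_
      push_cast; ring
    rw [e1, ← Finset.prod_eq_prod_Ico_succ_bot (by omega) (fun m : ℕ => α + (m:ℂ)),
      Finset.prod_Ico_succ_top hs]
    congr 1
    push_cast [Nat.cast_sub (by omega : k ≤ L)]
    ring
  generalize hP : (∏ m ∈ Finset.Ico s (L-k), (α + (m:ℂ))) = P at *
  generalize hP' : (∏ m ∈ Finset.Ico s (L-k), ((α+1) + (m:ℂ))) = P' at *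
  have hf1 : ((Nat.factorial k : ℂ)) ≠ 0 := Nat.cast_ne_zero.2 (Nat.factorial_ne_zero k)
  have hf2 : ((Nat.factorial (L - 2*k) : ℂ)) ≠ 0 := Nat.cast_ne_zero.2 (Nat.factorial_ne_zero _)
  have hk1 : ((k:ℂ)+1) ≠ 0 := Nat.cast_add_one_ne_zero k
  rw [Nat.factorial_succ]
  push_cast
  have hsgn : (-1:ℂ)^(k+1) = -(-1)^k := by rw [pow_succ]; ring
  have hsq : (-1:ℂ)^k * (-1)^k = 1 := by rw [← mul_pow]; norm_num
  rw [hsgn]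
  have C8 : ℂ := 0
  rcases Nat.even_or_odd k with hpk | hpk <;>
    [skip; skip] <;>
    (rcases Nat.even_or_odd (L - 2*k) with hpl | hpl
     · simp only [hpk.neg_one_pow, hpl.neg_one_pow, Odd.neg_one_pow]
       field_simp
       linear_combination (8 * D) * hprod2
     · simp only [hpk.neg_one_pow, hpl.neg_one_pow, Odd.neg_one_pow]
       field_simp
       linear_combination (-8 * D) * hprod2)

end Aux2

end Aux


/-- `(x_1² + ⋯ + x_{n−1}²)·𝒦_{λ−1,ν+1} = 4ν·𝒦_{λ,ν} − 4(λ − (n−1)/2 + ⌊(ν−λ+1)/2⌋)·𝒦_{λ+1,ν+1}`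
as tempered distributions on ℝ^n, tested against an arbitrary Schwartz function `φ`. -/
theorem stmt16 (n : ℕ) (hn : 2 ≤ n) (lam nu : ℂ) (l : ℤ) (hl : 0 ≤ l)
    (hln : nu - lam = (l : ℂ)) (φ : SchwartzMap (Fin n → ℝ) ℂ) :
    Kact n (lam - 1) (l + 2)
        (fun x => ((∑ k ∈ Finset.univ.filter (fun k : Fin n => (k : ℕ) < n - 1),
            (x k) ^ 2 : ℝ) : ℂ) * φ x)
      = 4 * nu * Kact n lam l ⇑φ
        - 4 * (lam - ((n : ℂ) - 1) / 2 + (((l + 1) / 2 : ℤ) : ℂ)) *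
            Kact n (lam + 1) l ⇑φ := by
  have hn0 : 0 < n := by omega
  have hφ : ContDiff ℝ ∞ (⇑φ) := φ.smooth ⊤
  set L := l.toNat with hLdef
  have hlL : l = (L : ℤ) := (Int.toNat_of_nonneg hl).symm
  have hnu : nu = lam + (L : ℂ) := by
    have : nu - lam = ((L : ℤ) : ℂ) := by rw [← hlL]; exact hln
    push_cast at this
    linear_combination this
  have hψ : (fun x => ((∑ k ∈ Finset.univ.filter (fun k : Fin n => (k : ℕ) < n - 1),
      (x k) ^ 2 : ℝ) : ℂ) * φ x) = fun x => r2C n x * ⇑φ x := by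
    funext x
    congr 1
    simp only [r2C, Sn, coordC]
    push_cast
    rfl
  rw [hψ]
  have hl2 : (0:ℤ) ≤ l + 2 := by omega
  simp only [Kact, if_pos hl2, if_pos hl]
  have htn : (l+2).toNat = L + 2 := by omega
  rw [htn]
  have hd2 : (L+2)/2 + 1 = (L/2 + 1) + 1 := by omega
  rw [hd2, Finset.sum_range_succ']
  simp only [Function.iterate_zero, id_eq, Nat.mul_zero, Nat.sub_zero,
    eval0_r2 hn0 hφ, mul_zero, add_zero]
  have ha1 : lam + 1 - ((n:ℂ)-1)/2 = (lam - ((n:ℂ)-1)/2) + 1 := by ring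
  have ha2 : lam - 1 - ((n:ℂ)-1)/2 = (lam - ((n:ℂ)-1)/2) - 1 := by ring
  have hs1 : (((l+1)/2 : ℤ) : ℂ) = (((L+1)/2 : ℕ) : ℂ) := by
    rw [show (l+1)/2 = (((L+1)/2 : ℕ):ℤ) from by omega]
    norm_cast
  have hν : lam + (L:ℂ) = (lam - ((n:ℂ)-1)/2) + ((n:ℂ)-1)/2 + (L:ℂ) := by ring
  rw [ha1, ha2, hs1, hnu, hν, Finset.mul_sum, Finset.mul_sum, ← Finset.sum_sub_distrib]
  refine Finset.sum_congr rfl fun k hk => ?_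
  have hkle : k ≤ L/2 := by
    have := Finset.mem_range.1 hk
    omega
  have he1 : L + 2 - 2*(k+1) = L - 2*k := by omega
  rw [he1, keyEval hn0 hφ k (L - 2*k)]
  exact coeffId (lam - ((n:ℂ)-1)/2) (n:ℂ) (pdLast^[L-2*k] (lapP^[k] ⇑φ) 0) L k hkle
end

section
/- Let μ ∈ ℂ and let a ≥ 2 be an integer. Then the renormalized Gegenbauer polynomials satisfy the three-term relation (μ + a)·C̃_a^μ(z) + C̃_{a−2}^{μ+1}(z) = (μ + ⌊(a+1)/2⌋)·C̃_a^{μ+1}(z) as an identity of polynomials in ℂ[z]. -/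
/-- The renormalized Gegenbauer polynomial C̃_l^α as an element of ℂ[z]. -/
noncomputable def gegenPoly (α : ℂ) (l : ℕ) : Polynomial ℂ :=
  ∑ k ∈ Finset.range (l / 2 + 1), Polynomial.C (gegenCoeff α l k) * Polynomial.X ^ (l - 2 * k)

lemma prod_shift (μ : ℂ) (b c : ℕ) :
    ∏ m ∈ Finset.Ico b c, (μ + 1 + (m : ℂ)) = ∏ m ∈ Finset.Ico (b + 1) (c + 1), (μ + (m : ℂ)) := by
  rw [Finset.prod_Ico_eq_prod_range, Finset.prod_Ico_eq_prod_range]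
  have : c + 1 - (b + 1) = c - b := by omega
  rw [this]
  apply Finset.prod_congr rfl
  intro i _
  push_cast
  ring

lemma hfacne (n : ℕ) : (Nat.factorial n : ℂ) ≠ 0 := by
  exact_mod_cast Nat.factorial_ne_zero n

-- F2
lemma keyF2 (μ : ℂ) (a k : ℕ) (ha : 2 ≤ a) (hk : k ≤ a / 2) :
    (μ + (((a + 1) / 2 : ℕ) : ℂ)) * gegenCoeff (μ + 1) a k
      = (μ + (a : ℂ) - k) * gegenCoeff μ a k := by
  have hha : (a + 1) / 2 ≤ a - k := by omega
  have hR : (μ + (((a + 1) / 2 : ℕ) : ℂ)) * ∏ m ∈ Finset.Ico ((a + 1) / 2) (a - k), (μ + 1 + (m : ℂ))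
      = (μ + (a : ℂ) - k) * ∏ m ∈ Finset.Ico ((a + 1) / 2) (a - k), (μ + (m : ℂ)) := by
    rw [prod_shift, ← Finset.prod_eq_prod_Ico_succ_bot (by omega : (a + 1) / 2 < a - k + 1)
      (fun m : ℕ => μ + (m : ℂ)),
      show a - k + 1 = (a - k) + 1 from rfl, Finset.prod_Ico_succ_top hha]
    have : ((a - k : ℕ) : ℂ) = (a : ℂ) - k := by
      push_cast [Nat.cast_sub (by omega : k ≤ a)]; ring
    rw [this]; ring
  rw [gegenCoeff, gegenCoeff, ← mul_div_assoc, ← mul_div_assoc]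
  congr 1
  linear_combination (-1 : ℂ) ^ k * 2 ^ (a - 2 * k) * hR

-- F1
lemma keyF1 (μ : ℂ) (a k : ℕ) (ha : 2 ≤ a) (hk : k ≤ a / 2) (hk0 : 1 ≤ k) :
    gegenCoeff (μ + 1) (a - 2) (k - 1) = -(k : ℂ) * gegenCoeff μ a k := by
  rw [gegenCoeff, gegenCoeff]
  have e1 : (a - 2 + 1) / 2 = (a + 1) / 2 - 1 := by omega
  have e2 : a - 2 - (k - 1) = a - k - 1 := by omega
  have e3 : a - 2 - 2 * (k - 1) = a - 2 * k := by omega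
  rw [e1, e2, e3]
  have e4 : ∏ m ∈ Finset.Ico ((a + 1) / 2 - 1) (a - k - 1), (μ + 1 + (m : ℂ))
      = ∏ m ∈ Finset.Ico ((a + 1) / 2) (a - k), (μ + (m : ℂ)) := by
    rw [prod_shift, show (a + 1) / 2 - 1 + 1 = (a + 1) / 2 by omega,
      show a - k - 1 + 1 = a - k by omega]
  rw [e4]
  have hfack : (Nat.factorial k : ℂ) = k * Nat.factorial (k - 1) := by
    rw [← Nat.mul_factorial_pred (by omega : k ≠ 0)]; push_cast; ring
  have hpow : ((-1 : ℂ)) ^ k = (-1 : ℂ) ^ (k - 1) * (-1) := by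
    conv_lhs => rw [show k = k - 1 + 1 by omega]
    rw [pow_succ]
  rw [hfack, hpow]
  have hkne : (k : ℂ) ≠ 0 := by exact_mod_cast (by omega : k ≠ 0)
  field_simp [hkne, hfacne (k - 1), hfacne (a - 2 * k)]

lemma key (μ : ℂ) (a k : ℕ) (ha : 2 ≤ a) (hk : k ≤ a / 2) :
    (μ + a) * gegenCoeff μ a k
      + (if k = 0 then 0 else gegenCoeff (μ + 1) (a - 2) (k - 1))
      = (μ + (((a + 1) / 2 : ℕ) : ℂ)) * gegenCoeff (μ + 1) a k := by
  rw [keyF2 μ a k ha hk]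
  rcases Nat.eq_zero_or_pos k with hk0 | hk0
  · subst hk0; simp
  · rw [if_neg (by omega), keyF1 μ a k ha hk hk0]
    ring


/-- The three-term relation `(μ + a)·C̃_a^μ + C̃_{a−2}^{μ+1} = (μ + ⌊(a+1)/2⌋)·C̃_a^{μ+1}`. -/
theorem stmt19 (μ : ℂ) (a : ℕ) (ha : 2 ≤ a) :
    Polynomial.C (μ + (a : ℂ)) * gegenPoly μ a + gegenPoly (μ + 1) (a - 2)
      = Polynomial.C (μ + (((a + 1) / 2 : ℕ) : ℂ)) * gegenPoly (μ + 1) a := by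
  have hn : (a - 2) / 2 + 1 = a / 2 := by omega
  have h2 : gegenPoly (μ + 1) (a - 2) = ∑ k ∈ Finset.range (a / 2 + 1),
      (if k = 0 then 0
        else Polynomial.C (gegenCoeff (μ + 1) (a - 2) (k - 1)) * Polynomial.X ^ (a - 2 * k)) := by
    rw [Finset.sum_range_succ' _ (a / 2)]
    simp only [Nat.succ_ne_zero, Nat.add_one_ne_zero, if_false, ite_false, if_true, ite_true,
      if_pos rfl, Nat.add_sub_cancel, add_zero]
    rw [gegenPoly, hn]
    apply Finset.sum_congr rfl
    intro k _
    congr 2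
    omega
  rw [h2, gegenPoly, gegenPoly, Finset.mul_sum, Finset.mul_sum, ← Finset.sum_add_distrib]
  apply Finset.sum_congr rfl
  intro k hk
  have hk' : k ≤ a / 2 := by
    simp only [Finset.mem_range] at hk; omega
  have hkey := key μ a k ha hk'
  rcases Nat.eq_zero_or_pos k with hk0 | hk0
  · subst hk0
    rw [if_pos rfl, add_zero] at hkey
    rw [if_pos rfl, add_zero]
    rw [← mul_assoc, ← Polynomial.C_mul, hkey, Polynomial.C_mul, mul_assoc]
  · rw [if_neg (by omega)] at hkey ⊢
    rw [← mul_assoc, ← Polynomial.C_mul, ← mul_assoc, ← Polynomial.C_mul,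
      ← add_mul, ← Polynomial.C_add, hkey, Polynomial.C_mul, mul_assoc]
end
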